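/- For every integer N ≥ 2, the determinant of the sine matrix S_N equals (−1)^{N⁻(N⁻−1)/2} · N^{N⁻/2} / 2^{N⁻}. -/

import Mathlib

open Real Finset Polynomial Polynomial.Chebyshev

/-- The discrete sine matrix `S_N`, of size `N⁻ × N⁻` with `N⁻ = ⌊(N−1)/2⌋`:
its `(m,n)` entry (for `1 ≤ m,n ≤ N⁻`) is `sin(2πmn/N)`. -/
noncomputable def sinMatrix (N : ℕ) : Matrix (Fin ((N - 1) / 2)) (Fin ((N - 1) / 2)) ℝ :=
  Matrix.of fun m n => Real.sin (2 * Real.pi * ((m : ℕ) + 1) * ((n : ℕ) + 1) / N)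

/-- Key cosine sum. -/
lemma sum_cos_eq (N j : ℕ) (hN : 2 ≤ N) (hj : j < N) :
    ∑ n ∈ range ((N - 1) / 2), Real.cos (2 * π * j * (n + 1) / N) =
      ((if j = 0 then (N : ℝ) else 0) - 1 - (if N % 2 = 0 then (-1 : ℝ) ^ j else 0)) / 2 := by
  set K := (N - 1) / 2 with hK
  have hN0 : (N : ℝ) ≠ 0 := by positivity
  have hNC : (N : ℂ) ≠ 0 := Nat.cast_ne_zero.mpr (by omega)
  set u : ℂ := Complex.exp (2 * π * Complex.I * j / N) with hu
  have hu0 : u ≠ 0 := Complex.exp_ne_zero _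
  have huN : u ^ N = 1 := by
    rw [hu, ← Complex.exp_nat_mul]
    have : (N : ℂ) * (2 * π * Complex.I * j / N) = j * (2 * π * Complex.I) := by
      field_simp
    rw [this, Complex.exp_nat_mul, Complex.exp_two_pi_mul_I, one_pow]
  have hKN : 2 * K ≤ N - 1 := Nat.mul_div_le _ _ |>.trans le_rfl
  -- pointwise identity
  have hpt : ∀ n ∈ range K, (Real.cos (2 * π * j * (n + 1) / N) : ℂ)
      = (u ^ (n + 1) + u ^ (N - 1 - n)) / 2 := by
    intro n hn
    have hnK : n < K := mem_range.mp hn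
    rw [Complex.ofReal_cos]
    show (Complex.exp _ + Complex.exp _) / 2 = _
    congr 1
    · congr 1
      · rw [← Complex.exp_nat_mul]
        congr 1
        push_cast
        field_simp
      · have hexp : u ^ (n + 1) * u ^ (N - 1 - n) = 1 := by
          rw [← pow_add]
          have : n + 1 + (N - 1 - n) = N := by omega
          rw [this, huN]
        have h1 : u ^ (N - 1 - n) = (u ^ (n + 1))⁻¹ :=
          eq_inv_of_mul_eq_one_left (by rw [mul_comm] at hexp; exact hexp)
        rw [h1, ← Complex.exp_nat_mul, ← Complex.exp_neg]
        congr 1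
        push_cast
        field_simp
  by_cases hj0 : j = 0
  · subst hj0
    have h1 : ∀ n ∈ range K, Real.cos (2 * π * (0:ℕ) * (n + 1) / N) = 1 := by
      intro n _
      norm_num
    rw [Finset.sum_congr rfl h1, Finset.sum_const, Finset.card_range]
    rcases Nat.even_or_odd N with hNe | hNo
    · obtain ⟨t, ht⟩ := hNe
      have hNK : N = 2 * K + 2 := by omega
      simp only [if_pos rfl, if_pos (by omega : N % 2 = 0)]
      rw [hNK]
      push_cast
      ring
    · obtain ⟨t, ht⟩ := hNo
      have hNK : N = 2 * K + 1 := by omega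
      simp only [if_pos rfl, if_neg (by omega : ¬ N % 2 = 0)]
      rw [hNK]
      push_cast
      ring
  · have hπ : (π : ℂ) ≠ 0 := Complex.ofReal_ne_zero.mpr Real.pi_ne_zero
    have hu1 : u ≠ 1 := by
      intro h
      rw [hu, Complex.exp_eq_one_iff] at h
      obtain ⟨n, hn⟩ := h
      have hjn : (j : ℂ) = n * N := by
        field_simp at hn
        have h2 : (2 * (π:ℂ) * Complex.I) * j = (2 * (π:ℂ) * Complex.I) * (n * N) := by
          linear_combination (2 * (π:ℂ) * Complex.I) * hn
        exact mul_left_cancel₀ (by simp [hπ, Complex.I_ne_zero]) h2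
      have hjn' : (j : ℤ) = n * N := by exact_mod_cast hjn
      have hdvd : (N : ℤ) ∣ (j : ℤ) := ⟨n, by linarith⟩
      have : N ∣ j := Int.natCast_dvd_natCast.mp (by simpa using hdvd)
      have := Nat.le_of_dvd (by omega) this
      omega
    have hne : u - 1 ≠ 0 := sub_ne_zero.mpr hu1
    have hGc : (∑ n ∈ range K, u ^ n) * (u - 1) = u ^ K - 1 := geom_sum_mul u K
    apply Complex.ofReal_injective
    rw [Complex.ofReal_sum, Finset.sum_congr rfl hpt, ← Finset.sum_div]
    have hG : ∑ n ∈ range K, (u ^ (n + 1) + u ^ (N - 1 - n))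
        = (u + u ^ (N - K)) * ∑ n ∈ range K, u ^ n := by
      rw [Finset.sum_add_distrib, add_mul, Finset.mul_sum, Finset.mul_sum]
      congr 1
      · exact Finset.sum_congr rfl fun n _ => by rw [pow_succ']
      · rw [show (∑ i ∈ range K, u ^ (N - K) * u ^ i) = ∑ i ∈ range K, u ^ (N - K + i) from
            Finset.sum_congr rfl fun i _ => (pow_add u _ i).symm,
          ← Finset.sum_range_reflect (fun n => u ^ (N - K + n)) K]
        exact Finset.sum_congr rfl fun n hn => by
          have := mem_range.mp hn
          congr 1
          omega
    rw [hG]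
    apply mul_right_cancel₀ hne
    rcases Nat.even_or_odd N with hNe | hNo
    · obtain ⟨t, ht⟩ := hNe
      have hNK : N - K = K + 2 := by omega
      have hN2 : N = 2 * K + 2 := by omega
      have huN' : u ^ (2 * K + 2) = 1 := by rw [← hN2]; exact huN
      have huK : u ^ (K + 1) = (-1 : ℂ) ^ j := by
        rw [hu, ← Complex.exp_nat_mul]
        have harg : ((K : ℂ) + 1) * (2 * π * Complex.I * j / N) = j * (π * Complex.I) := by
          have hNc : (N : ℂ) = 2 * ((K : ℂ) + 1) := by rw [hN2]; push_cast; ring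
          have hK1 : ((K : ℂ) + 1) ≠ 0 := Nat.cast_add_one_ne_zero K
          rw [hNc]
          field_simp
        rw [show ((K + 1 : ℕ) : ℂ) = (K : ℂ) + 1 by push_cast; ring, harg,
          Complex.exp_nat_mul, Complex.exp_pi_mul_I]
      rw [hNK]
      simp only [if_neg hj0, if_pos (by omega : N % 2 = 0)]
      push_cast
      linear_combination ((u + u ^ (K + 2)) / 2) * hGc + (1 / 2 : ℂ) * huN'
        + ((1 - u) / 2) * huK
    · obtain ⟨t, ht⟩ := hNo
      have hNK : N - K = K + 1 := by omega
      have hN2 : N = 2 * K + 1 := by omega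
      have huN' : u ^ (2 * K + 1) = 1 := by rw [← hN2]; exact huN
      rw [hNK]
      simp only [if_neg hj0, if_neg (by omega : ¬ N % 2 = 0)]
      push_cast
      linear_combination ((u + u ^ (K + 1)) / 2) * hGc + (1 / 2 : ℂ) * huN'


lemma sum_sin_mul_sin (N a b : ℕ) (hN : 2 ≤ N) (hb : 1 ≤ b) (hba : b ≤ a)
    (hab : a + b ≤ N - 1) :
    ∑ n ∈ range ((N - 1) / 2), Real.sin (2 * π * a * (n + 1) / N) *
        Real.sin (2 * π * b * (n + 1) / N) =
      if a = b then (N : ℝ) / 4 else 0 := by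
  have key : ∀ n ∈ range ((N - 1) / 2),
      Real.sin (2 * π * a * (n + 1) / N) * Real.sin (2 * π * b * (n + 1) / N)
        = (Real.cos (2 * π * ((a - b : ℕ)) * (n + 1) / N)
            - Real.cos (2 * π * ((a + b : ℕ)) * (n + 1) / N)) / 2 := by
    intro n _
    have h1 : ((a - b : ℕ) : ℝ) = (a : ℝ) - b := by
      push_cast [hba]; ring
    have hd : 2 * π * ((a - b : ℕ) : ℝ) * (n + 1) / N
        = 2 * π * a * (n + 1) / N - 2 * π * b * (n + 1) / N := by
      rw [h1]; ring
    have hs : 2 * π * ((a + b : ℕ) : ℝ) * (n + 1) / N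
        = 2 * π * a * (n + 1) / N + 2 * π * b * (n + 1) / N := by
      push_cast; ring
    rw [hd, hs, Real.cos_sub, Real.cos_add]
    ring
  rw [Finset.sum_congr rfl key, ← Finset.sum_div, Finset.sum_sub_distrib,
    sum_cos_eq N (a - b) hN (by omega), sum_cos_eq N (a + b) hN (by omega)]
  have hpar : (-1 : ℝ) ^ (a - b) = (-1) ^ (a + b) := by
    have h2 : a + b = (a - b) + 2 * b := by omega
    rw [h2, pow_add, pow_mul]
    norm_num
  rw [if_neg (show ¬ a + b = 0 by omega)]
  by_cases hab2 : a = b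
  · rw [if_pos hab2, if_pos (by omega : a - b = 0)]
    split_ifs with h
    · rw [hpar]; ring
    · ring
  · rw [if_neg hab2, if_neg (by omega : ¬ a - b = 0)]
    split_ifs with h
    · rw [hpar]; ring
    · ring


lemma U_deg_lead (n : ℕ) :
    (U ℝ n).natDegree = n ∧ (U ℝ n).leadingCoeff = 2 ^ n := by
  induction n using Nat.strong_induction_on with
  | _ n ih =>
    match n with
    | 0 => constructor <;> simp [U_zero]
    | 1 => constructor <;> simp [U_one, leadingCoeff]
    | (m + 2) =>
      obtain ⟨hd1, hl1⟩ := ih (m + 1) (by omega)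
      obtain ⟨hd0, hl0⟩ := ih m (by omega)
      have hrec : U ℝ ((m + 2 : ℕ) : ℤ) = 2 * X * U ℝ (m + 1 : ℕ) - U ℝ (m : ℕ) := by
        have := U_add_two ℝ ((m : ℕ) : ℤ)
        push_cast at this ⊢
        exact this
      have hp1 : (U ℝ ((m+1 : ℕ) : ℤ)) ≠ 0 := by
        intro h
        rw [h] at hl1
        simp at hl1
        exact pow_ne_zero _ (two_ne_zero) hl1.symm
      have h2X : ((2 : ℝ[X]) * X).natDegree = 1 := by
        simpa using natDegree_C_mul_X (2 : ℝ) two_ne_zero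
      have hC : (2 : ℝ[X]) = C 2 := rfl
      have h2Xl : ((2 : ℝ[X]) * X).leadingCoeff = 2 := by
        rw [hC, ← pow_one (X : ℝ[X])]
        exact leadingCoeff_C_mul_X_pow 2 1
      have h2X0 : ((2 : ℝ[X]) * X) ≠ 0 := by
        intro h
        rw [h] at h2X
        simp at h2X
      have hdm : ((2 : ℝ[X]) * X * U ℝ (m + 1 : ℕ)).natDegree = m + 2 := by
        rw [natDegree_mul h2X0 hp1, h2X, hd1]
        omega
      have hlm : ((2 : ℝ[X]) * X * U ℝ (m + 1 : ℕ)).leadingCoeff = 2 ^ (m + 2) := by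
        rw [leadingCoeff_mul, h2Xl, hl1]
        ring
      have hdeglt : (U ℝ (m : ℕ)).degree < ((2 : ℝ[X]) * X * U ℝ (m + 1 : ℕ)).degree := by
        apply lt_of_le_of_lt (degree_le_natDegree)
        rw [degree_eq_natDegree (by intro h; rw [h] at hdm; simp at hdm), hdm, hd0]
        exact_mod_cast by omega
      constructor
      · rw [hrec]
        rw [natDegree_sub_eq_left_of_natDegree_lt (by rw [hdm, hd0]; omega), hdm]
      · rw [hrec, leadingCoeff_sub_of_degree_lt hdeglt, hlm]


lemma sinMatrix_mul_self (N : ℕ) (hN : 2 ≤ N) :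
    sinMatrix N * sinMatrix N = ((N : ℝ) / 4) • 1 := by
  have hKN : 2 * ((N - 1) / 2) ≤ N - 1 := by omega
  ext m k
  rw [Matrix.mul_apply]
  simp only [sinMatrix, Matrix.of_apply, Matrix.smul_apply, Matrix.one_apply, smul_eq_mul]
  have hswap : ∀ n : Fin ((N - 1) / 2),
      Real.sin (2 * π * ((m : ℕ) + 1) * ((n : ℕ) + 1) / N) *
        Real.sin (2 * π * ((n : ℕ) + 1) * ((k : ℕ) + 1) / N)
      = Real.sin (2 * π * (((m : ℕ) + 1 : ℕ)) * ((n : ℕ) + 1) / N) *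
        Real.sin (2 * π * (((k : ℕ) + 1 : ℕ)) * ((n : ℕ) + 1) / N) := by
    intro n
    push_cast
    ring_nf
  rw [Finset.sum_congr rfl (fun n _ => hswap n),
    Fin.sum_univ_eq_sum_range (fun n => Real.sin (2 * π * (((m : ℕ) + 1 : ℕ)) * ((n : ℕ) + 1) / N) *
        Real.sin (2 * π * (((k : ℕ) + 1 : ℕ)) * ((n : ℕ) + 1) / N))]
  have hmk : (m = k) ↔ ((m : ℕ) + 1 = (k : ℕ) + 1) := by
    rw [Fin.ext_iff]; omega
  rcases le_total ((k : ℕ) + 1) ((m : ℕ) + 1) with h | h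
  · rw [sum_sin_mul_sin N ((m : ℕ) + 1) ((k : ℕ) + 1) hN (by omega) h
      (by have := m.isLt; have := k.isLt; omega)]
    by_cases he : m = k
    · rw [if_pos (hmk.mp he), if_pos he, mul_one]
    · rw [if_neg (fun hc => he (hmk.mpr hc)), if_neg he, mul_zero]
  · have hcomm : ∀ n ∈ range ((N - 1) / 2),
        Real.sin (2 * π * (((m : ℕ) + 1 : ℕ)) * ((n : ℕ) + 1) / N) *
          Real.sin (2 * π * (((k : ℕ) + 1 : ℕ)) * ((n : ℕ) + 1) / N)
        = Real.sin (2 * π * (((k : ℕ) + 1 : ℕ)) * ((n : ℕ) + 1) / N) *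
          Real.sin (2 * π * (((m : ℕ) + 1 : ℕ)) * ((n : ℕ) + 1) / N) :=
      fun n _ => mul_comm _ _
    rw [Finset.sum_congr rfl hcomm, sum_sin_mul_sin N ((k : ℕ) + 1) ((m : ℕ) + 1) hN (by omega) h
      (by have := m.isLt; have := k.isLt; omega)]
    by_cases he : m = k
    · subst he
      rw [if_pos rfl, if_pos rfl, mul_one]
    · rw [if_neg (fun hc => he (hmk.mpr hc.symm)), if_neg he, mul_zero]



lemma det_factor (N : ℕ) (hN : 2 ≤ N) :
    (sinMatrix N).det =
      (∏ m : Fin ((N - 1) / 2), Real.sin (2 * π * ((m : ℕ) + 1) / N)) *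
        (2 ^ ((N - 1) / 2 * ((N - 1) / 2 - 1) / 2) *
          ∏ i : Fin ((N - 1) / 2), ∏ j ∈ Finset.Ioi i,
            (Real.cos (2 * π * ((j : ℕ) + 1) / N) - Real.cos (2 * π * ((i : ℕ) + 1) / N))) := by
  set K := (N - 1) / 2 with hK
  set θ : Fin K → ℝ := fun m => 2 * π * ((m : ℕ) + 1) / N with hθ
  set q : Fin K → ℝ[X] := fun n => C ((2 : ℝ)⁻¹ ^ (n : ℕ)) * U ℝ (n : ℕ) with hq
  have hqdeg : ∀ n : Fin K, (q n).natDegree = n := by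
    intro n
    rw [hq]
    rw [natDegree_C_mul (by positivity), (U_deg_lead (n : ℕ)).1]
  have hqmonic : ∀ n : Fin K, Monic (q n) := by
    intro n
    unfold q
    unfold Monic
    rw [leadingCoeff_mul, leadingCoeff_C, (U_deg_lead (n : ℕ)).2]
    rw [← mul_pow]
    norm_num
  have hentry : ∀ m n : Fin K, sinMatrix N m n
      = Real.sin (θ m) * ((2 : ℝ) ^ (n : ℕ) * (q n).eval (Real.cos (θ m))) := by
    intro m n
    have hev : (q n).eval (Real.cos (θ m)) = (2 : ℝ)⁻¹ ^ (n : ℕ) * (U ℝ (n : ℕ)).eval (Real.cos (θ m)) := by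
      rw [hq]; simp [eval_mul]
    rw [hev]
    have hU := U_real_cos (θ m) (n : ℕ)
    have harg : (((n : ℕ) : ℝ) + 1) * θ m = 2 * π * ((m : ℕ) + 1) * ((n : ℕ) + 1) / N := by
      rw [hθ]
      push_cast
      ring
    have h2 : (2 : ℝ) ^ (n : ℕ) * ((2 : ℝ)⁻¹ ^ (n : ℕ) * (U ℝ (n : ℕ)).eval (Real.cos (θ m)))
        = (U ℝ (n : ℕ)).eval (Real.cos (θ m)) := by
      rw [← mul_assoc, ← mul_pow]
      norm_num
    rw [h2]
    show Real.sin (2 * π * ((m : ℕ) + 1) * ((n : ℕ) + 1) / N) = _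
    rw [mul_comm (Real.sin (θ m)), hU]
    congr 1
    · push_cast at harg ⊢
      linarith [harg]
  have hmat : sinMatrix N = Matrix.of (fun m n : Fin K => Real.sin (θ m) *
      (Matrix.of (fun m n : Fin K => (2 : ℝ) ^ (n : ℕ) *
        (Matrix.of (fun m n : Fin K => (q n).eval (Real.cos (θ m)))) m n)) m n) := by
    ext m n
    simpa using hentry m n
  rw [hmat, Matrix.det_mul_column, Matrix.det_mul_row,
    ← Matrix.det_eval_matrixOfPolynomials_eq_det_vandermonde (fun m => Real.cos (θ m)) q hqdeg
      hqmonic,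
    Matrix.det_vandermonde]
  have hpow : (∏ n : Fin K, (2 : ℝ) ^ (n : ℕ)) = 2 ^ (K * (K - 1) / 2) := by
    rw [Finset.prod_pow_eq_pow_sum]
    congr 1
    rw [Fin.sum_univ_eq_sum_range (fun n => n) K]
    exact Finset.sum_range_id K
  rw [hpow]

/-- For every integer `N ≥ 2`,
`det S_N = (−1)^{N⁻(N⁻−1)/2} · N^{N⁻/2} / 2^{N⁻}` where `N⁻ = ⌊(N−1)/2⌋`. -/
theorem det_sinMatrix (N : ℕ) (hN : 2 ≤ N) :
    (sinMatrix N).det =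
      (-1 : ℝ) ^ ((N - 1) / 2 * ((N - 1) / 2 - 1) / 2) *
        Real.sqrt N ^ ((N - 1) / 2) / 2 ^ ((N - 1) / 2) := by
  set K := (N - 1) / 2 with hK
  set e := K * (K - 1) / 2 with he
  have hKN : 2 * K ≤ N - 1 := by omega
  have hNpos : (0 : ℝ) < N := by positivity
  set θ : Fin K → ℝ := fun m => 2 * π * ((m : ℕ) + 1) / N with hθ
  have hθpos : ∀ m : Fin K, 0 < θ m ∧ θ m < π := by
    intro m
    have hm : 2 * ((m : ℕ) + 1) < N := by have := m.isLt; omega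
    have hmR : 2 * (((m : ℕ) : ℝ) + 1) < N := by exact_mod_cast hm
    constructor
    · apply div_pos (by positivity) hNpos
    · rw [div_lt_iff₀ hNpos]
      nlinarith [Real.pi_pos]
  -- positivity of sine product
  have hP : 0 < ∏ m : Fin K, Real.sin (θ m) := by
    apply Finset.prod_pos
    intro m _
    exact Real.sin_pos_of_pos_of_lt_pi (hθpos m).1 (hθpos m).2
  -- the Vandermonde factor
  have hVW : (∏ i : Fin K, ∏ j ∈ Finset.Ioi i, (Real.cos (θ j) - Real.cos (θ i)))
      = (-1 : ℝ) ^ e * ∏ i : Fin K, ∏ j ∈ Finset.Ioi i, (Real.cos (θ i) - Real.cos (θ j)) := by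
    have hstep : ∀ i : Fin K, (∏ j ∈ Finset.Ioi i, (Real.cos (θ j) - Real.cos (θ i)))
        = (-1 : ℝ) ^ (Finset.Ioi i).card * ∏ j ∈ Finset.Ioi i, (Real.cos (θ i) - Real.cos (θ j)) := by
      intro i
      rw [← Finset.prod_const, ← Finset.prod_mul_distrib]
      exact Finset.prod_congr rfl fun j _ => by ring
    rw [Finset.prod_congr rfl fun i _ => hstep i, Finset.prod_mul_distrib,
      Finset.prod_pow_eq_pow_sum]
    congr 2
    have hcard : ∀ i : Fin K, (Finset.Ioi i).card = K - 1 - (i : ℕ) := fun i => Fin.card_Ioi i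
    rw [Finset.sum_congr rfl fun i _ => hcard i,
      Fin.sum_univ_eq_sum_range (fun i => K - 1 - i) K,
      Finset.sum_range_reflect (fun i => i) K]
    exact Finset.sum_range_id K
  have hW : 0 < ∏ i : Fin K, ∏ j ∈ Finset.Ioi i, (Real.cos (θ i) - Real.cos (θ j)) := by
    apply Finset.prod_pos
    intro i _
    apply Finset.prod_pos
    intro j hj
    have hij : i < j := Finset.mem_Ioi.mp hj
    have hijR : ((i : ℕ) : ℝ) < ((j : ℕ) : ℝ) := by exact_mod_cast hij
    have hθij : θ i < θ j := by
      rw [hθ]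
      rw [div_lt_div_iff₀ hNpos hNpos]
      nlinarith [mul_pos (mul_pos (two_pos (α := ℝ)) Real.pi_pos) hNpos]
    linarith [Real.cos_lt_cos_of_nonneg_of_le_pi (hθpos i).1.le (hθpos j).2.le hθij]
  -- determinant with sign
  have hdet : (sinMatrix N).det = (-1 : ℝ) ^ e *
      ((∏ m : Fin K, Real.sin (θ m)) * 2 ^ e *
        ∏ i : Fin K, ∏ j ∈ Finset.Ioi i, (Real.cos (θ i) - Real.cos (θ j))) := by
    rw [det_factor N hN]
    rw [show (∏ i : Fin K, ∏ j ∈ Finset.Ioi i,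
      (Real.cos (2 * π * ((j : ℕ) + 1) / N) - Real.cos (2 * π * ((i : ℕ) + 1) / N)))
      = ∏ i : Fin K, ∏ j ∈ Finset.Ioi i, (Real.cos (θ j) - Real.cos (θ i)) from rfl, hVW]
    ring
  -- square of determinant
  have hsq : (sinMatrix N).det ^ 2 = ((N : ℝ) / 4) ^ K := by
    rw [sq, ← Matrix.det_mul, sinMatrix_mul_self N hN, Matrix.det_smul, Matrix.det_one,
      mul_one, Fintype.card_fin]
  set t : ℝ := Real.sqrt N ^ K / 2 ^ K with htdef
  have ht : 0 < t := by positivity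
  have ht2 : t ^ 2 = ((N : ℝ) / 4) ^ K := by
    rw [htdef, div_pow, ← pow_mul, ← pow_mul, mul_comm K 2, pow_mul, pow_mul,
      Real.sq_sqrt hNpos.le, ← div_pow]
    norm_num
  have hcases : (sinMatrix N).det = t ∨ (sinMatrix N).det = -t := by
    have h0 : ((sinMatrix N).det - t) * ((sinMatrix N).det + t) = 0 := by
      linear_combination hsq - ht2
    rcases mul_eq_zero.mp h0 with h | h
    · left; linarith
    · right; linarith
  have hR : 0 < (∏ m : Fin K, Real.sin (θ m)) * 2 ^ e *
      ∏ i : Fin K, ∏ j ∈ Finset.Ioi i, (Real.cos (θ i) - Real.cos (θ j)) := by positivity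
  rw [mul_div_assoc]
  rcases Nat.even_or_odd e with heven | hodd
  · rw [heven.neg_one_pow] at hdet ⊢
    rw [one_mul] at hdet ⊢
    rcases hcases with h | h
    · exact h
    · exfalso; rw [h] at hdet; linarith
  · rw [hodd.neg_one_pow] at hdet ⊢
    rw [neg_one_mul] at hdet ⊢
    rcases hcases with h | h
    · exfalso; rw [h] at hdet; linarith
    · exact h
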